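/- Let a, a', b, b' be complex numbers and let k ≥ 1 and ω₀ = e^{2πi/k}. Suppose that for every k-th root of unity ω, (a + ωb)^k = (ωa' + b')^k. Then a^k + b^k = a'^k + b'^k and, for every 1 ≤ i ≤ k−1, a^{k−i} b^i = a'^i b'^{k−i}. -/

import Mathlib

open Polynomial Finset

/-- If (a + ωb)^k = (ωa' + b')^k for every k-th root of unity ω, then the binomial
coefficient differences all vanish: a^k + b^k = a'^k + b'^k and
a^{k-i} b^i = a'^i b'^{k-i} for 1 ≤ i ≤ k-1. -/
theorem stmt_4 (k : ℕ) (hk : 1 ≤ k) (a b a' b' : ℂ)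
    (ω₀ : ℂ) (hω₀ : ω₀ = Complex.exp (2 * Real.pi * Complex.I / k))
    (h : ∀ ω : ℂ, ω ^ k = 1 → (a + ω * b) ^ k = (ω * a' + b') ^ k) :
    a ^ k + b ^ k = a' ^ k + b' ^ k ∧
      ∀ i : ℕ, 1 ≤ i → i ≤ k - 1 →
        a ^ (k - i) * b ^ i = a' ^ i * b' ^ (k - i) := by
  have hkpos : 0 < k := hk
  set c : ℕ → ℂ := fun i => (k.choose i : ℂ) * (a ^ (k - i) * b ^ i - a' ^ i * b' ^ (k - i))
    with hc
  set d : ℕ → ℂ := fun i => if i = 0 then c 0 + c k else c i with hd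
  set Q : Polynomial ℂ := ∑ i ∈ range k, C (d i) * X ^ i with hQ
  -- Q vanishes at each k-th root of unity
  have heval : ∀ ω ∈ nthRootsFinset k (1 : ℂ), Q.eval ω = 0 := by
    intro ω hω
    rw [mem_nthRootsFinset hkpos (1 : ℂ)] at hω
    have h0 := sub_eq_zero.mpr (h ω hω)
    have expand : (a + ω * b) ^ k - (ω * a' + b') ^ k = ∑ i ∈ range (k + 1), ω ^ i * c i := by
      rw [add_comm a (ω * b), add_pow, add_pow, ← Finset.sum_sub_distrib]
      refine Finset.sum_congr rfl fun i hi => ?_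
      have hik : i ≤ k := Nat.lt_succ_iff.mp (Finset.mem_range.mp hi)
      simp only [hc, mul_pow]
      ring
    have hsplit : ∑ i ∈ range (k + 1), ω ^ i * c i
        = (c 0 + c k) + ∑ i ∈ Ico 1 k, ω ^ i * c i := by
      rw [Finset.sum_range_succ, hω, one_mul, Finset.range_eq_Ico,
        Finset.sum_eq_sum_Ico_succ_bot hkpos]
      simp only [pow_zero, one_mul]
      ring
    have hQeval : Q.eval ω = (c 0 + c k) + ∑ i ∈ Ico 1 k, ω ^ i * c i := by
      rw [hQ]
      simp only [eval_finset_sum, eval_mul, eval_C, eval_pow, eval_X]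
      rw [Finset.range_eq_Ico, Finset.sum_eq_sum_Ico_succ_bot hkpos]
      have hsum : ∑ i ∈ Ico 1 k, d i * ω ^ i = ∑ i ∈ Ico 1 k, ω ^ i * c i := by
        refine Finset.sum_congr rfl fun i hi => ?_
        obtain ⟨h1, h2⟩ := Finset.mem_Ico.mp hi
        simp only [hd, if_neg (by omega : i ≠ 0)]
        ring
      rw [hsum]
      simp only [hd, pow_zero, if_pos rfl, mul_one]
    rw [hQeval, ← hsplit, ← expand, h0]
  have hdeg : Q.natDegree < k := by
    have hle : Q.natDegree ≤ k - 1 := by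
      apply natDegree_sum_le_of_forall_le
      intro i hi
      refine (natDegree_C_mul_X_pow_le _ _).trans ?_
      have := Finset.mem_range.mp hi
      omega
    omega
  have hprim := Complex.isPrimitiveRoot_exp k hkpos.ne'
  have hcard : k ≤ (nthRootsFinset k (1 : ℂ)).card := by rw [hprim.card_nthRootsFinset]
  have hQ0 : Q = 0 :=
    Polynomial.eq_zero_of_natDegree_lt_card_of_eval_eq_zero' Q _ heval (hdeg.trans_le hcard)
  have hcoeff : ∀ i, i < k → d i = 0 := by
    intro i hi
    have hco : Q.coeff i = d i := by
      rw [hQ, finset_sum_coeff]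
      rw [Finset.sum_eq_single i]
      · simp
      · intro j hj hji
        simp [coeff_C_mul, coeff_X_pow, hji.symm]
      · intro hni
        exact absurd (Finset.mem_range.mpr hi) hni
    rw [hQ0, coeff_zero] at hco
    exact hco.symm
  constructor
  · have h0 := hcoeff 0 hkpos
    simp only [hd, if_pos rfl, hc] at h0
    simp only [Nat.choose_zero_right, Nat.choose_self, Nat.sub_zero, Nat.sub_self,
      pow_zero, Nat.cast_one, one_mul, mul_one] at h0
    linear_combination h0
  · intro i hi1 hik
    have hikk : i < k := by omega
    have h0 := hcoeff i hikk
    rw [hd] at h0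
    simp only [if_neg (by omega : i ≠ 0), hc] at h0
    have hch : (k.choose i : ℂ) ≠ 0 :=
      Nat.cast_ne_zero.mpr (Nat.choose_pos hikk.le).ne'
    rcases mul_eq_zero.mp h0 with h' | h'
    · exact absurd h' hch
    · exact sub_eq_zero.mp h'
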